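/- Let Ŝ be a process with (1-κ)S_t ≤ Ŝ_t ≤ (1+κ)S_t for all t, where S > 0 and κ ∈ (0,1). Then for any right-continuous bounded-variation strategy γ with γ_{0-}=0, the frictionless wealth ∫₀ᵗ γ_{u-} dŜ_u dominates the liquidation value under transaction costs: ∫₀ᵗ γ_{u-} dŜ_u ≥ V^γ_t = γ_t S_t - ∫₀ᵗ S_u dγ_u - κ|γ_t|S_t - κ∫₀ᵗ S_u|dγ_u|, for all t ∈ [0,T]. -/

import Mathlib

open MeasureTheory Set Filter Topology

lemma meas_comp_countable {g : ℝ → ℝ} (hg : Measurable g)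
    (hc : (Set.range g).Countable) (h : ℝ → ℝ) : Measurable (h ∘ g) := by
  intro A hA
  have : (h ∘ g) ⁻¹' A = g ⁻¹' (h ⁻¹' A ∩ Set.range g) := by
    rw [Set.preimage_inter_range]; rfl
  rw [this]
  exact hg ((hc.mono Set.inter_subset_right).measurableSet)

lemma shat_clamp_measurable (T t : ℝ) (ht0 : 0 ≤ t) (htT : t ≤ T)
    (Shat : ℝ → ℝ)
    (hShat_rc : ∀ s ∈ Set.Ico (0:ℝ) T, ContinuousWithinAt Shat (Set.Ici s) s) :
    Measurable (fun u => Shat (min t (max 0 u))) := by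
  set g : ℕ → ℝ → ℝ :=
    fun n u => min t ((↑(⌊(max 0 u) * (2:ℝ)^n⌋ + 1)) / (2:ℝ)^n) with hg
  have hfl : ∀ (n : ℕ) (v : ℝ), v < (↑(⌊v * (2:ℝ)^n⌋ + 1) : ℝ) / 2^n := by
    intro n v
    have h2 : (0:ℝ) < 2^n := by positivity
    rw [lt_div_iff₀ h2]
    push_cast
    exact Int.lt_floor_add_one _
  have hgm : ∀ n, Monotone (g n) := by
    intro n a b hab
    simp only [hg]
    have h2 : (0:ℝ) < 2^n := by positivity
    refine min_le_min le_rfl ?_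
    gcongr
  have hmeas : ∀ n, Measurable (fun u => Shat (g n u)) := by
    intro n
    have hcnt : (Set.range (g n)).Countable := by
      have hsub : Set.range (g n)
          ⊆ insert t (Set.range (fun k : ℤ => ((k:ℝ)+1) / 2^n)) := by
        rintro x ⟨u, rfl⟩
        rcases le_total t ((↑(⌊(max 0 u) * (2:ℝ)^n⌋ + 1) : ℝ) / 2^n) with h1 | h1
        · left; simp only [hg]; rw [min_eq_left h1]
        · right
          refine ⟨⌊(max 0 u) * (2:ℝ)^n⌋, ?_⟩
          simp only [hg]
          rw [min_eq_right h1]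
          push_cast; ring
      exact Set.Countable.mono hsub ((Set.countable_range _).insert t)
    exact meas_comp_countable ((hgm n).measurable) hcnt Shat
  apply measurable_of_tendsto_metrizable hmeas
  rw [tendsto_pi_nhds]
  intro u
  set v := max 0 u with hv
  have hv0 : 0 ≤ v := le_max_left _ _
  by_cases hvt : t ≤ v
  · have hconst : ∀ n, g n u = t := by
      intro n
      simp only [hg]
      exact min_eq_left (le_of_lt (lt_of_le_of_lt hvt (hfl n v)))
    rw [min_eq_left hvt]
    simp only [hconst]
    exact tendsto_const_nhds
  · push_neg at hvt
    rw [min_eq_right hvt.le]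
    have hrc := hShat_rc v ⟨hv0, lt_of_lt_of_le hvt htT⟩
    have hle : ∀ n : ℕ, v ≤ g n u := by
      intro n; simp only [hg]; exact le_min hvt.le (hfl n v).le
    have hub : ∀ n : ℕ, g n u ≤ v + (1/2)^n := by
      intro n
      have h2 : (0:ℝ) < 2^n := by positivity
      simp only [hg]
      refine le_trans (min_le_right _ _) ?_
      rw [div_le_iff₀ h2]
      push_cast
      have h3 := Int.floor_le (v * (2:ℝ)^n)
      have h4 : (v + (1/2:ℝ)^n) * 2^n = v * 2^n + 1 := by
        rw [add_mul, ← mul_pow]; norm_num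
      nlinarith
    have htend : Tendsto (fun n => g n u) atTop (𝓝 v) := by
      have h1 : Tendsto (fun n : ℕ => v + (1/2:ℝ)^n) atTop (𝓝 (v + 0)) :=
        tendsto_const_nhds.add
          (tendsto_pow_atTop_nhds_zero_of_lt_one (by norm_num) (by norm_num))
      rw [add_zero] at h1
      exact tendsto_of_tendsto_of_tendsto_of_le_of_le tendsto_const_nhds h1 hle hub
    have htend' : Tendsto (fun n => g n u) atTop (𝓝[Set.Ici v] v) :=
      tendsto_nhdsWithin_iff.2 ⟨htend, Filter.Eventually.of_forall (fun n => hle n)⟩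
    exact hrc.tendsto.comp htend'

lemma integrableOn_of_bounded_meas (μ : Measure ℝ) (s : Set ℝ)
    (hfin : μ s < ⊤) {f : ℝ → ℝ} (hf : Measurable f) (C : ℝ)
    (hC : ∀ u, ‖f u‖ ≤ C) : IntegrableOn f s μ := by
  refine Integrable.mono' (g := fun _ => C) ?_ hf.aestronglyMeasurable ?_
  · exact integrableOn_const hfin.ne
  · exact Filter.Eventually.of_forall hC



/-- **The frictionless shadow wealth dominates the liquidation value.**  Let
`(1-κ)S ≤ Ŝ ≤ (1+κ)S` on `[0,T]` with `S > 0` continuous and `Ŝ` right-continuous, and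
let `γ = γ⁺ - γ⁻` be right-continuous of bounded variation with `γ(0-) = 0` (encoded via
Stieltjes functions vanishing on `(-∞,0)`).  Then, with the frictionless wealth defined
via integration by parts `∫₀ᵗ γ_{u-} dŜ_u = γ_t Ŝ_t - ∫₀ᵗ Ŝ_u dγ_u`, one has
`∫₀ᵗ γ_{u-} dŜ_u ≥ V^γ_t = γ_t S_t - ∫₀ᵗ S_u dγ_u - κ|γ_t|S_t - κ∫₀ᵗ S_u |dγ_u|`. -/
theorem stmt16
    (T κ : ℝ) (hT : 0 < T) (hκ : κ ∈ Set.Ioo (0:ℝ) 1)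
    (S Shat : ℝ → ℝ)
    (hS_cont : ContinuousOn S (Set.Icc 0 T))
    (hS_pos : ∀ t ∈ Set.Icc (0:ℝ) T, 0 < S t)
    (hShat_rc : ∀ t ∈ Set.Ico (0:ℝ) T, ContinuousWithinAt Shat (Set.Ici t) t)
    (hbid : ∀ t ∈ Set.Icc (0:ℝ) T, (1 - κ) * S t ≤ Shat t)
    (hask : ∀ t ∈ Set.Icc (0:ℝ) T, Shat t ≤ (1 + κ) * S t)
    (γp γm : StieltjesFunction ℝ)
    (hγp0 : ∀ t < (0:ℝ), γp t = 0) (hγm0 : ∀ t < (0:ℝ), γm t = 0)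
    (γ : ℝ → ℝ) (hγ : ∀ t, γ t = γp t - γm t)
    (t : ℝ) (ht : t ∈ Set.Icc (0:ℝ) T) :
    γ t * S t
      - ((∫ u in Set.Icc (0:ℝ) t, S u ∂γp.measure)
          - ∫ u in Set.Icc (0:ℝ) t, S u ∂γm.measure)
      - κ * |γ t| * S t
      - κ * ((∫ u in Set.Icc (0:ℝ) t, S u ∂γp.measure)
          + ∫ u in Set.Icc (0:ℝ) t, S u ∂γm.measure)
    ≤ γ t * Shat t
      - ((∫ u in Set.Icc (0:ℝ) t, Shat u ∂γp.measure)
          - ∫ u in Set.Icc (0:ℝ) t, Shat u ∂γm.measure) := by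
  obtain ⟨ht0, htT⟩ := ht
  obtain ⟨hκ0, hκ1⟩ := hκ
  have hsub : Set.Icc (0:ℝ) t ⊆ Set.Icc (0:ℝ) T := Set.Icc_subset_Icc le_rfl htT
  -- bound for S
  obtain ⟨C, hC⟩ := (isCompact_Icc (a := (0:ℝ)) (b := T)).exists_bound_of_continuousOn hS_cont
  -- the clamp function
  set cl : ℝ → ℝ := fun u => min t (max 0 u) with hcl
  have hcl_mem : ∀ u, cl u ∈ Set.Icc (0:ℝ) T :=
    fun u => ⟨le_min ht0 (le_max_left _ _), le_trans (min_le_left _ _) htT⟩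
  have hcl_cont : Continuous cl := continuous_const.min (continuous_const.max continuous_id)
  have hcl_id : ∀ u ∈ Set.Icc (0:ℝ) t, cl u = u := by
    intro u ⟨hu0, hut⟩
    simp only [hcl]
    rw [max_eq_right hu0, min_eq_right hut]
  -- measurable/continuous clamped versions
  have hF_meas : Measurable (fun u => Shat (cl u)) :=
    shat_clamp_measurable T t ht0 htT Shat hShat_rc
  have hG_cont : Continuous (fun u => S (cl u)) :=
    hS_cont.comp_continuous hcl_cont hcl_mem
  -- bounds
  have hG_bdd : ∀ u, ‖S (cl u)‖ ≤ C := fun u => hC _ (hcl_mem u)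
  have hF_bdd : ∀ u, ‖Shat (cl u)‖ ≤ (1 + κ) * C := by
    intro u
    have hm := hcl_mem u
    have h1 := hbid _ hm
    have h2 := hask _ hm
    have h3 := hS_pos _ hm
    have h4 : S (cl u) ≤ C := le_trans (le_abs_self _) (hG_bdd u)
    have h5 : 0 < Shat (cl u) := lt_of_lt_of_le (by nlinarith) h1
    rw [Real.norm_eq_abs, abs_of_pos h5]
    nlinarith
  -- integrability
  have key : ∀ μ : Measure ℝ, μ (Set.Icc (0:ℝ) t) < ⊤ →
      IntegrableOn Shat (Set.Icc 0 t) μ ∧ IntegrableOn S (Set.Icc 0 t) μ := by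
    intro μ hfin
    constructor
    · exact (integrableOn_of_bounded_meas μ _ hfin hF_meas _ hF_bdd).congr_fun
        (fun u hu => by beta_reduce; rw [hcl_id u hu]) measurableSet_Icc
    · exact (integrableOn_of_bounded_meas μ _ hfin hG_cont.measurable _ hG_bdd).congr_fun
        (fun u hu => by beta_reduce; rw [hcl_id u hu]) measurableSet_Icc
  have hfinp : γp.measure (Set.Icc (0:ℝ) t) < ⊤ := by
    rw [γp.measure_Icc]; exact ENNReal.ofReal_lt_top
  have hfinm : γm.measure (Set.Icc (0:ℝ) t) < ⊤ := by
    rw [γm.measure_Icc]; exact ENNReal.ofReal_lt_top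
  obtain ⟨hip, hipS⟩ := key γp.measure hfinp
  obtain ⟨him, himS⟩ := key γm.measure hfinm
  -- integral comparisons
  have hcomp1 : (∫ u in Set.Icc (0:ℝ) t, Shat u ∂γp.measure)
      ≤ (1 + κ) * ∫ u in Set.Icc (0:ℝ) t, S u ∂γp.measure := by
    rw [← MeasureTheory.integral_const_mul]
    exact setIntegral_mono_on hip (hipS.const_mul _) measurableSet_Icc
      (fun x hx => hask x (hsub hx))
  have hcomp2 : (1 - κ) * (∫ u in Set.Icc (0:ℝ) t, S u ∂γm.measure)
      ≤ ∫ u in Set.Icc (0:ℝ) t, Shat u ∂γm.measure := by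
    rw [← MeasureTheory.integral_const_mul]
    exact setIntegral_mono_on (himS.const_mul _) him measurableSet_Icc
      (fun x hx => hbid x (hsub hx))
  -- pointwise comparison at t
  have htm : t ∈ Set.Icc (0:ℝ) T := ⟨ht0, htT⟩
  have hb := hbid t htm
  have ha := hask t htm
  have hpos := hS_pos t htm
  have habs : |Shat t - S t| ≤ κ * S t := abs_le.2 ⟨by linarith, by linarith⟩
  have hpt : -(|γ t| * (κ * S t)) ≤ γ t * (Shat t - S t) := by
    have h1 : |γ t * (Shat t - S t)| = |γ t| * |Shat t - S t| := abs_mul _ _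
    have h2 : |γ t| * |Shat t - S t| ≤ |γ t| * (κ * S t) :=
      mul_le_mul_of_nonneg_left habs (abs_nonneg _)
    have h3 := neg_abs_le (γ t * (Shat t - S t))
    linarith [h3, h1 ▸ h2]
  nlinarith [hpt, hcomp1, hcomp2]
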